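/- arXiv:1703.00135 — 2 statements merged into one kernel-verified Lean document; each statement's English description precedes it below -/
import Mathlib

section
/- Let 1 ≤ s ≤ N, 1 ≤ k ≤ m ≤ N, λ > 0, and set η = (s + λ²k)/min{s, λ²k}. If A ∈ ℂ^{m×N} satisfies the Restricted Isometry Property for the sparse corruptions problem of order (2s, 2k) with constant δ_{2s,2k} < 1/√(1 + (1/(2√2) + √η)²), then A satisfies the ℓ²-robust null space property of order (s,k) with weight λ and constants ρ = 2√2·δ_{2s,2k}·√η / (2√2·√(1 − δ_{2s,2k}²) − δ_{2s,2k}) and τ = 2√2·√(1 + δ_{2s,2k}) / (2√2·√(1 − δ_{2s,2k}²) − δ_{2s,2k}), and these constants satisfy 0 < ρ < 1 and τ > 0. -/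
open Finset Matrix MeasureTheory

noncomputable def l1norm {n : ℕ} (x : Fin n → ℂ) : ℝ := ∑ i, ‖x i‖

noncomputable def l2norm {n : ℕ} (x : Fin n → ℂ) : ℝ := Real.sqrt (∑ i, ‖x i‖ ^ 2)

/-- The vector equal to `x` on `S` and zero elsewhere. -/
def restr {n : ℕ} (x : Fin n → ℂ) (S : Finset (Fin n)) : Fin n → ℂ :=
  fun i => if i ∈ S then x i else 0

/-- `x` has at most `s` nonzero entries. -/
def IsSparse {n : ℕ} (s : ℕ) (x : Fin n → ℂ) : Prop :=
  ∃ S : Finset (Fin n), S.card ≤ s ∧ ∀ i ∉ S, x i = 0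

/-- Best `s`-term approximation error of `x` in the `ℓ¹` norm. -/
noncomputable def sigma1 {n : ℕ} (s : ℕ) (x : Fin n → ℂ) : ℝ :=
  sInf {t : ℝ | ∃ z : Fin n → ℂ, IsSparse s z ∧ t = l1norm (x - z)}

/-- `η_{s,k}(λ) = (s + λ²k)/min{s, λ²k}`. -/
noncomputable def etaSK (s k : ℕ) (lam : ℝ) : ℝ :=
  ((s : ℝ) + lam ^ 2 * k) / min (s : ℝ) (lam ^ 2 * k)

/-- The ℓ¹-robust null space property of order (s,k) with weight lam, constants ρ, τ. -/
def L1RNSP {m N : ℕ} (A : Matrix (Fin m) (Fin N) ℂ) (s k : ℕ) (lam ρ τ : ℝ) : Prop :=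
  ∀ (x : Fin N → ℂ) (c : Fin m → ℂ) (S : Finset (Fin N)) (T : Finset (Fin m)),
    S.card ≤ s → T.card ≤ k →
      l1norm (restr x S) + lam * l1norm (restr c T) ≤
        ρ * (l1norm (restr x Sᶜ) + lam * l1norm (restr c Tᶜ)) + τ * l2norm (A.mulVec x + c)

/-- The ℓ²-robust null space property of order (s,k) with weight lam, constants ρ, τ. -/
def L2RNSP {m N : ℕ} (A : Matrix (Fin m) (Fin N) ℂ) (s k : ℕ) (lam ρ τ : ℝ) : Prop :=
  ∀ (x : Fin N → ℂ) (c : Fin m → ℂ) (S : Finset (Fin N)) (T : Finset (Fin m)),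
    S.card ≤ s → T.card ≤ k →
      Real.sqrt (l2norm (restr x S) ^ 2 + l2norm (restr c T) ^ 2) ≤
        (ρ / Real.sqrt ((s : ℝ) + lam ^ 2 * k)) *
            (l1norm (restr x Sᶜ) + lam * l1norm (restr c Tᶜ)) +
          τ * l2norm (A.mulVec x + c)

/-- `A` satisfies the two-sided RIP inequality for the sparse corruptions problem of
order `(s,k)` with constant `δ`. -/
def RIPCor {m N : ℕ} (A : Matrix (Fin m) (Fin N) ℂ) (s k : ℕ) (δ : ℝ) : Prop :=
  ∀ (x : Fin N → ℂ) (c : Fin m → ℂ), IsSparse s x → IsSparse k c →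
    (1 - δ) * (l2norm x ^ 2 + l2norm c ^ 2) ≤ l2norm (A.mulVec x + c) ^ 2 ∧
      l2norm (A.mulVec x + c) ^ 2 ≤ (1 + δ) * (l2norm x ^ 2 + l2norm c ^ 2)

/-- `A` satisfies the RIP inequality for sparse vectors of order `s` with constant `δ`. -/
def RIPSparse {m N : ℕ} (A : Matrix (Fin m) (Fin N) ℂ) (s : ℕ) (δ : ℝ) : Prop :=
  ∀ x : Fin N → ℂ, IsSparse s x →
    (1 - δ) * l2norm x ^ 2 ≤ l2norm (A.mulVec x) ^ 2 ∧
      l2norm (A.mulVec x) ^ 2 ≤ (1 + δ) * l2norm x ^ 2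

/-- `(xh, ch)` is a minimizer of `‖z‖₁ + lam ‖d‖₁` subject to `‖Az + d - y‖₂ ≤ ε`. -/
def IsMinimizer {m N : ℕ} (A : Matrix (Fin m) (Fin N) ℂ) (y : Fin m → ℂ) (lam ε : ℝ)
    (xh : Fin N → ℂ) (ch : Fin m → ℂ) : Prop :=
  l2norm (A.mulVec xh + ch - y) ≤ ε ∧
    ∀ (z : Fin N → ℂ) (d : Fin m → ℂ), l2norm (A.mulVec z + d - y) ≤ ε →
      l1norm xh + lam * l1norm ch ≤ l1norm z + lam * l1norm d

/-- Spectral norm of a matrix (operator norm w.r.t. Euclidean norms). -/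
noncomputable def specNorm {a b : ℕ} (B : Matrix (Fin a) (Fin b) ℂ) : ℝ :=
  ‖LinearMap.toContinuousLinearMap (Matrix.toEuclideanLin B)‖

/-- `σ_{s,k}(A)`: the maximum spectral norm over `k × s` submatrices of `A`. -/
noncomputable def sigmaSK {m N : ℕ} (A : Matrix (Fin m) (Fin N) ℂ) (s k : ℕ) : ℝ :=
  sSup {t : ℝ | ∃ (S : Finset (Fin N)) (T : Finset (Fin m)) (hS : S.card = s) (hT : T.card = k),
    t = specNorm (A.submatrix (fun i : Fin k => ((T.orderIsoOfFin hT i : Fin m)))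
      (fun j : Fin s => ((S.orderIsoOfFin hS j : Fin N))))}

/-- discriminant lemma -/
lemma aux_quad {p q c : ℝ} (h : ∀ t : ℝ, 0 ≤ p + 2*t*c + q*t^2) : c^2 ≤ p*q := by
  rcases eq_or_ne q 0 with hq | hq
  · subst hq
    rcases eq_or_ne c 0 with hc | hc
    · have hp := h 0; nlinarith
    · have hkey := h (-(p+1)/(2*c))
      have h2 : p + 2 * (-(p+1)/(2*c)) * c + 0*(-(p+1)/(2*c))^2 = -1 := by
        field_simp; ring
      rw [h2] at hkey; linarith
  · have hq0 : 0 < q := by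
      by_contra hcon
      push_neg at hcon
      have hqneg : q < 0 := lt_of_le_of_ne hcon hq
      have hnq : 0 < -q := by linarith
      have key : ∀ t : ℝ, 1 ≤ t → q*t + 2*|c| ≤ -(|p|+1) → False := by
        intro t ht h2
        have hkey := h t
        have hcc : c ≤ |c| := le_abs_self c
        have hpp : p ≤ |p| := le_abs_self p
        have hstep1 : p + 2*t*c + q*t^2 ≤ |p| + t*(2*|c| + q*t) := by nlinarith
        have hneg : 2*|c| + q*t ≤ 0 := by linarith [abs_nonneg p]
        have hstep2 : t*(2*|c| + q*t) ≤ 1*(2*|c| + q*t) := by nlinarith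
        nlinarith [abs_nonneg p]
      apply key ((|p| + 2*|c| + 1)/(-q) + 1)
      · have : 0 ≤ (|p| + 2*|c| + 1)/(-q) := by positivity
        linarith
      · have hqq : q * ((|p|+2*|c|+1)/(-q)) = -(|p|+2*|c|+1) := by
          field_simp
        rw [mul_add, hqq]; linarith
    have hkey := h (-c/q)
    have h2 : p + 2 * (-c/q) * c + q*(-c/q)^2 = p - c^2/q := by field_simp; ring
    rw [h2] at hkey
    have := (div_le_iff₀ hq0).mp (by linarith : c^2/q ≤ p)
    linarith

/-- min-combination lemma for the cross term -/
lemma aux_cross_scalar {p1 p2 q1 q2 cc n1sq n2sq : ℝ}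
    (hsum : (q1+q2)*n1sq = (p1+p2)*n2sq)
    (h1 : cc^2 ≤ p1*q1) (h2 : cc^2 ≤ p2*q2)
    (hp1 : 0 ≤ p1) (hp2 : 0 ≤ p2) (hn1 : 0 ≤ n1sq) :
    cc^2*n1sq ≤ p1*p2*n2sq := by
  rcases le_or_gt (q1*n1sq) (p2*n2sq) with h | h
  · nlinarith
  · have : q2*n1sq ≤ p1*n2sq := by nlinarith
    nlinarith

noncomputable def ipx {n : ℕ} (y z : Fin n → ℂ) : ℝ := ∑ i, ((starRingEnd ℂ) (y i) * z i).re

lemma sumsq_nonneg {n : ℕ} (y : Fin n → ℂ) : 0 ≤ ∑ i, ‖y i‖^2 :=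
  Finset.sum_nonneg fun i _ => sq_nonneg _

lemma l2norm_nonneg {n : ℕ} (y : Fin n → ℂ) : 0 ≤ l2norm y := Real.sqrt_nonneg _

lemma l1norm_nonneg {n : ℕ} (y : Fin n → ℂ) : 0 ≤ l1norm y :=
  Finset.sum_nonneg fun i _ => norm_nonneg _

lemma l2norm_sq {n : ℕ} (y : Fin n → ℂ) : l2norm y ^ 2 = ∑ i, ‖y i‖^2 :=
  Real.sq_sqrt (sumsq_nonneg y)

-- pointwise expansion
lemma pt_expand (a b : ℂ) (t : ℝ) :
    ‖a + (t:ℂ) * b‖^2 = ‖a‖^2 + 2*t*((starRingEnd ℂ) a * b).re + t^2*‖b‖^2 := by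
  rw [Complex.sq_norm, Complex.sq_norm, Complex.sq_norm]
  simp only [Complex.normSq_apply, Complex.add_re, Complex.add_im,
    Complex.mul_re, Complex.mul_im, Complex.conj_re, Complex.conj_im,
    Complex.ofReal_re, Complex.ofReal_im]
  ring

lemma expand_sum {n : ℕ} (y z : Fin n → ℂ) (t : ℝ) :
    ∑ i, ‖y i + (t:ℂ) * z i‖^2 =
      (∑ i, ‖y i‖^2) + 2*t*(ipx y z) + t^2*(∑ i, ‖z i‖^2) := by
  rw [ipx, Finset.mul_sum, Finset.mul_sum, ← Finset.sum_add_distrib, ← Finset.sum_add_distrib]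
  exact Finset.sum_congr rfl fun i _ => pt_expand (y i) (z i) t

lemma ipx_self {n : ℕ} (y : Fin n → ℂ) : ipx y y = ∑ i, ‖y i‖^2 := by
  unfold ipx
  refine Finset.sum_congr rfl fun i _ => ?_
  rw [mul_comm, Complex.mul_conj, Complex.ofReal_re, ← Complex.sq_norm]

lemma ipx_CS {n : ℕ} (y z : Fin n → ℂ) : ipx y z ≤ l2norm y * l2norm z := by
  have hq : (ipx y z)^2 ≤ (∑ i, ‖y i‖^2) * (∑ i, ‖z i‖^2) := by
    apply aux_quad
    intro t
    have h1 := expand_sum y z t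
    have h2 := sumsq_nonneg (fun i => y i + (t:ℂ)*z i)
    linarith
  calc ipx y z ≤ |ipx y z| := le_abs_self _
    _ = Real.sqrt ((ipx y z)^2) := (Real.sqrt_sq_eq_abs _).symm
    _ ≤ Real.sqrt ((∑ i, ‖y i‖^2) * (∑ i, ‖z i‖^2)) := Real.sqrt_le_sqrt hq
    _ = l2norm y * l2norm z := by
        rw [Real.sqrt_mul (sumsq_nonneg y)]; rfl

lemma ipx_sum_right {n : ℕ} (y : Fin n → ℂ) {κ : Type*} (F : Finset κ) (z : κ → (Fin n → ℂ)) :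
    ipx y (∑ j ∈ F, z j) = ∑ j ∈ F, ipx y (z j) := by
  unfold ipx
  rw [Finset.sum_comm]
  refine Finset.sum_congr rfl fun i _ => ?_
  rw [Finset.sum_apply, Finset.mul_sum, Complex.re_sum]

/-- selection lemma: sum over any set of card ≤ s is at most sum over first s, for antitone nonneg h -/
lemma aux_sel {h : ℕ → ℝ} (hmono : ∀ a b : ℕ, a ≤ b → h b ≤ h a) (hpos : ∀ t, 0 ≤ h t)
    {T : Finset ℕ} {s : ℕ} (hT : T.card ≤ s) :
    ∑ t ∈ T, h t ≤ ∑ t ∈ Finset.range s, h t := by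
  set R := Finset.range s with hR
  have hsplitT : ∑ t ∈ T, h t = ∑ t ∈ T ∩ R, h t + ∑ t ∈ T \ R, h t :=
    (Finset.sum_inter_add_sum_sdiff T R h).symm
  have hsplitR : ∑ t ∈ R, h t = ∑ t ∈ T ∩ R, h t + ∑ t ∈ R \ T, h t := by
    rw [Finset.inter_comm]
    exact (Finset.sum_inter_add_sum_sdiff R T h).symm
  have hcard : (T \ R).card ≤ (R \ T).card := by
    have h1 : (T ∩ R).card + (T \ R).card = T.card := Finset.card_inter_add_card_sdiff T R
    have h2 : (R ∩ T).card + (R \ T).card = R.card := Finset.card_inter_add_card_sdiff R T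
    have h3 : R.card = s := by rw [hR, Finset.card_range]
    rw [Finset.inter_comm] at h2
    omega
  have hup : ∑ t ∈ T \ R, h t ≤ ((T \ R).card : ℝ) * h s := by
    have := Finset.sum_le_card_nsmul (T \ R) h (h s) (by
      intro t ht
      apply hmono
      have := (Finset.mem_sdiff.1 ht).2
      rw [hR, Finset.mem_range] at this
      omega)
    simpa [nsmul_eq_mul] using this
  have hlow : ((R \ T).card : ℝ) * h s ≤ ∑ t ∈ R \ T, h t := by
    have := Finset.card_nsmul_le_sum (R \ T) h (h s) (by
      intro t ht
      apply hmono
      have := (Finset.mem_sdiff.1 ht).1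
      rw [hR, Finset.mem_range] at this
      omega)
    simpa [nsmul_eq_mul] using this
  have hcard' : ((T \ R).card : ℝ) * h s ≤ ((R \ T).card : ℝ) * h s := by
    have := hpos s
    have : ((T \ R).card : ℝ) ≤ ((R \ T).card : ℝ) := by exact_mod_cast hcard
    nlinarith [hpos s]
  linarith

/-- telescoping -/
lemma aux_tele (f : ℕ → ℝ) (J : ℕ) :
    ∑ j ∈ Finset.Icc 1 J, (f j - f (j+1)) = f 1 - f (J+1) := by
  induction J with
  | zero => simp
  | succ J ih =>
    rw [Finset.sum_Icc_succ_top (by omega : 1 ≤ J + 1), ih]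
    ring

/-- per-block sqrt lifting -/
lemma aux_block {G : ℕ → ℝ} (hmono : ∀ a b : ℕ, a ≤ b → G b ≤ G a) (hpos : ∀ t, 0 ≤ G t)
    {s : ℕ} (hs : 1 ≤ s) (a : ℕ) :
    Real.sqrt (∑ t ∈ Finset.Ico a (a+s), G t ^2) ≤
      (1/Real.sqrt s) * (∑ t ∈ Finset.Ico a (a+s), G t)
        + (Real.sqrt s / 4) * (G a - G (a+s-1)) := by
  set L := ∑ t ∈ Finset.Ico a (a+s), G t with hL
  set M := G a with hM
  set m' := G (a+s-1) with hm'
  have hMm : m' ≤ M := hmono a (a+s-1) (by omega)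
  have hm0 : 0 ≤ m' := hpos _
  have hL0 : 0 ≤ L := Finset.sum_nonneg fun t _ => hpos t
  have hcard : (Finset.Ico a (a+s)).card = s := by rw [Nat.card_Ico]; omega
  have hub : ∑ t ∈ Finset.Ico a (a+s), G t ^2 ≤ (M + m')*L - (s:ℝ)*(M*m') := by
    have hptw : ∀ t ∈ Finset.Ico a (a+s), G t^2 ≤ (M+m')*G t - M*m' := by
      intro t ht
      rw [Finset.mem_Ico] at ht
      have h1 : G t ≤ M := hmono a t ht.1
      have h2 : m' ≤ G t := hmono t (a+s-1) (by omega)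
      nlinarith
    calc ∑ t ∈ Finset.Ico a (a+s), G t^2 ≤ ∑ t ∈ Finset.Ico a (a+s), ((M+m')*G t - M*m') :=
          Finset.sum_le_sum hptw
      _ = (M + m')*L - (s:ℝ)*(M*m') := by
          rw [Finset.sum_sub_distrib, ← Finset.mul_sum, Finset.sum_const, hcard, nsmul_eq_mul]
  set r := Real.sqrt s with hr
  have hr0 : 0 < r := Real.sqrt_pos.2 (by exact_mod_cast Nat.lt_of_lt_of_le Nat.zero_lt_one hs)
  have hr2 : r^2 = (s:ℝ) := Real.sq_sqrt (by positivity)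
  have hkey : (s:ℝ) * (∑ t ∈ Finset.Ico a (a+s), G t ^2) ≤ (L + (s:ℝ)*(M-m')/4)^2 := by
    nlinarith [sq_nonneg (L - (s:ℝ)*(M+m')/2 + (s:ℝ)*(M-m')/4),
      mul_nonneg (mul_nonneg (mul_nonneg (by positivity : (0:ℝ) ≤ (s:ℝ)*(s:ℝ)) hm0) (by linarith : (0:ℝ) ≤ M - m')) (by norm_num : (0:ℝ) ≤ (1:ℝ)/2),
      sq_nonneg ((s:ℝ)), hpos a]
  have hZ0 : 0 ≤ L + (s:ℝ)*(M-m')/4 := by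
    have : 0 ≤ (s:ℝ) := by positivity
    nlinarith
  have hsqrt : Real.sqrt ((s:ℝ) * ∑ t ∈ Finset.Ico a (a+s), G t ^2) ≤ L + (s:ℝ)*(M-m')/4 := by
    calc Real.sqrt ((s:ℝ) * ∑ t ∈ Finset.Ico a (a+s), G t ^2)
        ≤ Real.sqrt ((L + (s:ℝ)*(M-m')/4)^2) := Real.sqrt_le_sqrt hkey
      _ = L + (s:ℝ)*(M-m')/4 := Real.sqrt_sq hZ0
  have hmulform : Real.sqrt ((s:ℝ) * ∑ t ∈ Finset.Ico a (a+s), G t ^2)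
      = r * Real.sqrt (∑ t ∈ Finset.Ico a (a+s), G t ^2) := by
    rw [Real.sqrt_mul (by positivity : (0:ℝ) ≤ (s:ℝ))]
  rw [hmulform] at hsqrt
  have hfinal : Real.sqrt (∑ t ∈ Finset.Ico a (a+s), G t ^2) ≤ (L + (s:ℝ)*(M-m')/4)/r :=
    (le_div_iff₀ hr0).2 (by linarith [hsqrt])
  have hform : (L + (s:ℝ)*(M-m')/4)/r = (1/r)*L + (r/4)*(M-m') := by
    rw [← hr2]; field_simp
  rw [hform] at hfinal
  exact hfinal

/-- master tail lemma -/
lemma aux_master {G : ℕ → ℝ} (hmono : ∀ a b : ℕ, a ≤ b → G b ≤ G a) (hpos : ∀ t, 0 ≤ G t)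
    {s : ℕ} (hs : 1 ≤ s) (J : ℕ) :
    ∑ j ∈ Finset.Icc 1 J, Real.sqrt (∑ t ∈ Finset.Ico (s*j) (s*j+s), G t ^2) ≤
      (1/Real.sqrt s) * (∑ t ∈ Finset.Ico s (s*J+s), G t)
        + (1/4) * Real.sqrt (∑ t ∈ Finset.Ico 0 s, G t^2) := by
  have hblocks : ∀ j : ℕ, Real.sqrt (∑ t ∈ Finset.Ico (s*j) (s*j+s), G t ^2) ≤
      (1/Real.sqrt s) * (∑ t ∈ Finset.Ico (s*j) (s*j+s), G t)
        + (Real.sqrt s / 4) * (G (s*j) - G (s*j+s-1)) :=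
    fun j => aux_block hmono hpos hs (s*j)
  have hsum1 : ∑ j ∈ Finset.Icc 1 J, (∑ t ∈ Finset.Ico (s*j) (s*j+s), G t)
      = ∑ t ∈ Finset.Ico s (s*J+s), G t := by
    induction J with
    | zero => simp
    | succ J ih =>
      rw [Finset.sum_Icc_succ_top (by omega : 1 ≤ J + 1), ih]
      have h1 : s*(J+1) = s*J+s := by ring
      have h2 : s*(J+1)+s = s*J+s+s := by ring
      rw [h2, h1]
      exact Finset.sum_Ico_consecutive _ (by omega) (by omega)
  have htel : ∑ j ∈ Finset.Icc 1 J, (G (s*j) - G (s*j+s-1)) ≤ G s := by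
    have hstep : ∀ j ∈ Finset.Icc 1 J, (G (s*j) - G (s*j+s-1)) ≤ (G (s*j) - G (s*(j+1))) := by
      intro j _
      have : G (s*(j+1)) ≤ G (s*j+s-1) := hmono _ _ (by
        have : s*(j+1) = s*j+s := by ring
        omega)
      linarith
    calc ∑ j ∈ Finset.Icc 1 J, (G (s*j) - G (s*j+s-1))
        ≤ ∑ j ∈ Finset.Icc 1 J, (G (s*j) - G (s*(j+1))) := Finset.sum_le_sum hstep
      _ = G (s*1) - G (s*(J+1)) := aux_tele (fun j => G (s*j)) J
      _ ≤ G s := by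
          have := hpos (s*(J+1))
          have : G (s*1) = G s := by norm_num
          linarith [hpos (s*(J+1)), this]
  have hGs : Real.sqrt s * G s ≤ Real.sqrt (∑ t ∈ Finset.Ico 0 s, G t^2) := by
    have hlow : (s:ℝ) * (G s)^2 ≤ ∑ t ∈ Finset.Ico 0 s, G t^2 := by
      have := Finset.card_nsmul_le_sum (Finset.Ico 0 s) (fun t => G t^2) ((G s)^2) (by
        intro t ht
        rw [Finset.mem_Ico] at ht
        have h1 : G s ≤ G t := hmono t s (by omega)
        show (G s)^2 ≤ G t ^2
        nlinarith [hpos t, hpos s])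
      rw [Nat.card_Ico] at this
      simpa [nsmul_eq_mul] using this
    calc Real.sqrt s * G s = Real.sqrt ((s:ℝ) * (G s)^2) := by
          rw [Real.sqrt_mul (by positivity : (0:ℝ) ≤ (s:ℝ)), Real.sqrt_sq (hpos s)]
      _ ≤ Real.sqrt (∑ t ∈ Finset.Ico 0 s, G t^2) := Real.sqrt_le_sqrt hlow
  calc ∑ j ∈ Finset.Icc 1 J, Real.sqrt (∑ t ∈ Finset.Ico (s*j) (s*j+s), G t ^2)
      ≤ ∑ j ∈ Finset.Icc 1 J, ((1/Real.sqrt s) * (∑ t ∈ Finset.Ico (s*j) (s*j+s), G t)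
          + (Real.sqrt s / 4) * (G (s*j) - G (s*j+s-1))) :=
        Finset.sum_le_sum fun j _ => hblocks j
    _ = (1/Real.sqrt s) * (∑ t ∈ Finset.Ico s (s*J+s), G t)
          + (Real.sqrt s/4) * (∑ j ∈ Finset.Icc 1 J, (G (s*j) - G (s*j+s-1))) := by
        rw [Finset.sum_add_distrib, ← Finset.mul_sum, ← Finset.mul_sum, hsum1]
    _ ≤ (1/Real.sqrt s) * (∑ t ∈ Finset.Ico s (s*J+s), G t)
          + (Real.sqrt s/4) * G s := by
        have hr0 : (0:ℝ) ≤ Real.sqrt s / 4 := by positivity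
        nlinarith [mul_le_mul_of_nonneg_left htel hr0]
    _ ≤ (1/Real.sqrt s) * (∑ t ∈ Finset.Ico s (s*J+s), G t)
          + (1/4) * Real.sqrt (∑ t ∈ Finset.Ico 0 s, G t^2) := by
        nlinarith [hGs]

lemma restr_sum_sq {n : ℕ} (y : Fin n → ℂ) (S : Finset (Fin n)) :
    l2norm (restr y S)^2 = ∑ i ∈ S, ‖y i‖^2 := by
  rw [l2norm_sq]
  rw [← Finset.sum_subset (Finset.subset_univ S) (fun i _ hi => by simp [restr, if_neg hi])]
  exact Finset.sum_congr rfl fun i hi => by simp [restr, if_pos hi]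

lemma restr_sum_l1 {n : ℕ} (y : Fin n → ℂ) (S : Finset (Fin n)) :
    l1norm (restr y S) = ∑ i ∈ S, ‖y i‖ := by
  unfold l1norm
  rw [← Finset.sum_subset (Finset.subset_univ S) (fun i _ hi => by simp [restr, if_neg hi])]
  exact Finset.sum_congr rfl fun i hi => by simp [restr, if_pos hi]

lemma blocks_exist {n : ℕ} (y : Fin n → ℂ) {p : ℕ} (hp : 1 ≤ p) (J : ℕ) (hJ : n ≤ J) :
    ∃ blk : ℕ → Finset (Fin n),
      (∀ j, (blk j).card ≤ p) ∧
      (∀ i : Fin n, ∀ j j' : ℕ, i ∈ blk j → i ∈ blk j' → j = j') ∧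
      (y = ∑ j ∈ Finset.range (J+1), restr y (blk j)) ∧
      (∀ S : Finset (Fin n), S.card ≤ p →
        l2norm (restr y S) ^ 2 ≤ l2norm (restr y (blk 0)) ^ 2) ∧
      (∀ S : Finset (Fin n), S.card ≤ p →
        l1norm (restr y (blk 0)ᶜ) ≤ l1norm (restr y Sᶜ)) ∧
      (∑ j ∈ Finset.Icc 1 J, l2norm (restr y (blk j)) ≤
        (1/Real.sqrt p) * l1norm (restr y (blk 0)ᶜ) + (1/4) * l2norm (restr y (blk 0))) := by
  classical
  set σ := Tuple.sort (fun i : Fin n => -‖y i‖) with hσ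
  have hsortmono : Monotone ((fun i : Fin n => -‖y i‖) ∘ σ) := Tuple.monotone_sort _
  set G : ℕ → ℝ := fun t => if h : t < n then ‖y (σ ⟨t, h⟩)‖ else 0 with hGdef
  have hGpos : ∀ t, 0 ≤ G t := by
    intro t
    rw [hGdef]
    dsimp only
    split
    · exact norm_nonneg _
    · exact le_refl 0
  have hGmono : ∀ a b : ℕ, a ≤ b → G b ≤ G a := by
    intro a b hab
    by_cases hb : b < n
    · have ha : a < n := lt_of_le_of_lt hab hb
      rw [hGdef]
      dsimp only
      rw [dif_pos ha, dif_pos hb]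
      have := hsortmono (show (⟨a, ha⟩ : Fin n) ≤ ⟨b, hb⟩ from hab)
      simp only [Function.comp_apply, neg_le_neg_iff] at this
      exact this
    · have : G b = 0 := by rw [hGdef]; dsimp only; rw [dif_neg hb]
      rw [this]; exact hGpos a
  set blk : ℕ → Finset (Fin n) :=
    fun j => Finset.univ.filter (fun i => (σ.symm i : ℕ) ∈ Finset.Ico (p*j) (p*j+p)) with hblk
  have hmem : ∀ (i : Fin n) (j : ℕ),
      i ∈ blk j ↔ (p*j ≤ (σ.symm i : ℕ) ∧ (σ.symm i : ℕ) < p*j+p) := by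
    intro i j
    rw [hblk]
    simp [Finset.mem_Ico]
  have huniq : ∀ (i : Fin n) (j j' : ℕ), i ∈ blk j → i ∈ blk j' → j = j' := by
    intro i j j' h1 h2
    rw [hmem] at h1 h2
    have e1 : (σ.symm i : ℕ)/p = j := Nat.div_eq_of_lt_le
      (by rw [mul_comm]; exact h1.1) (by rw [(by ring : (j+1)*p = p*j+p)]; exact h1.2)
    have e2 : (σ.symm i : ℕ)/p = j' := Nat.div_eq_of_lt_le
      (by rw [mul_comm]; exact h2.1) (by rw [(by ring : (j'+1)*p = p*j'+p)]; exact h2.2)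
    omega
  have hcard : ∀ j, (blk j).card ≤ p := by
    intro j
    have h1 : (blk j).card ≤ (Finset.Ico (p*j) (p*j+p)).card := by
      apply Finset.card_le_card_of_injOn (fun i => (σ.symm i : ℕ))
      · intro i hi
        rw [Finset.mem_coe, hmem] at hi
        simp only [Finset.mem_coe, Finset.mem_Ico]
        omega
      · intro i1 _ i2 _ h
        have : σ.symm i1 = σ.symm i2 := Fin.ext h
        exact σ.symm.injective this
    rw [Nat.card_Ico] at h1
    omega
  have hdecomp : y = ∑ j ∈ Finset.range (J+1), restr y (blk j) := by
    funext i
    rw [Finset.sum_apply]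
    have htn : ((σ.symm i : ℕ)) < n := (σ.symm i).2
    set t := (σ.symm i : ℕ) with htdef
    have hj0 : i ∈ blk (t/p) := by
      rw [hmem]
      constructor
      · rw [mul_comm]; exact Nat.div_mul_le_self t p
      · have h1 := Nat.div_add_mod t p
        have h2 : t % p < p := Nat.mod_lt _ (by omega)
        omega
    have hjmem : t/p ∈ Finset.range (J+1) := by
      rw [Finset.mem_range]
      have := Nat.div_le_self t p
      omega
    rw [Finset.sum_eq_single_of_mem (t/p) hjmem]
    · simp [restr, if_pos hj0]
    · intro j _ hne
      have hnotin : i ∉ blk j := fun hcon => hne (huniq i j (t/p) hcon hj0)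
      simp [restr, if_neg hnotin]
  -- reindexing helper
  have hre : ∀ (F : ℝ → ℝ), F 0 = 0 → ∀ a b : ℕ,
      ∑ t ∈ Finset.Ico a b, F (G t) =
        ∑ i ∈ Finset.univ.filter (fun i : Fin n => (σ.symm i : ℕ) ∈ Finset.Ico a b), F ‖y i‖ := by
    intro F hF a b
    rw [← Finset.sum_filter_add_sum_filter_not (Finset.Ico a b) (fun t => t < n)]
    have hz : ∑ t ∈ (Finset.Ico a b).filter (fun t => ¬ t < n), F (G t) = 0 := by
      apply Finset.sum_eq_zero
      intro t ht
      have hnt : ¬ t < n := (Finset.mem_filter.1 ht).2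
      rw [hGdef]
      dsimp only
      rw [dif_neg hnt, hF]
    rw [hz, add_zero]
    refine Finset.sum_bij' (fun t ht => σ ⟨t, (Finset.mem_filter.1 ht).2⟩)
      (fun i _ => (σ.symm i : ℕ)) ?_ ?_ ?_ ?_ ?_
    · intro a' ha'
      have h1 := (Finset.mem_filter.1 ha').1
      simp only [Finset.mem_filter, Finset.mem_univ, true_and]
      rw [Equiv.symm_apply_apply]
      exact h1
    · intro i hi
      have h1 := (Finset.mem_filter.1 hi).2
      rw [Finset.mem_filter]
      exact ⟨h1, (σ.symm i).2⟩
    · intro a' ha'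
      simp only [Equiv.symm_apply_apply]
    · intro i hi
      simp only [Fin.eta, Equiv.apply_symm_apply]
    · intro t ht
      have htn : t < n := (Finset.mem_filter.1 ht).2
      rw [hGdef]
      dsimp only
      rw [dif_pos htn]
  have hc2 : ∀ j, l2norm (restr y (blk j))^2 = ∑ t ∈ Finset.Ico (p*j) (p*j+p), (G t)^2 := by
    intro j
    rw [restr_sum_sq, hre (fun r => r^2) (by norm_num) (p*j) (p*j+p)]
  have hJble : n ≤ p*J+p := by
    have : J ≤ p*J := Nat.le_mul_of_pos_left J (by omega)
    omega
  have hcompl0 : (blk 0)ᶜ =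
      Finset.univ.filter (fun i : Fin n => (σ.symm i : ℕ) ∈ Finset.Ico p (p*J+p)) := by
    ext i
    rw [Finset.mem_compl, hmem]
    simp only [Finset.mem_filter, Finset.mem_univ, true_and, Finset.mem_Ico]
    have htn : ((σ.symm i : ℕ)) < n := (σ.symm i).2
    omega
  have hc1 : l1norm (restr y ((blk 0)ᶜ)) = ∑ t ∈ Finset.Ico p (p*J+p), G t := by
    rw [restr_sum_l1, hcompl0, hre (fun r => r) rfl p (p*J+p)]
  -- top-s lemmas
  have himg : ∀ S : Finset (Fin n), ∀ F : ℝ → ℝ,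
      ∑ i ∈ S, F ‖y i‖ = ∑ t ∈ S.image (fun i => (σ.symm i : ℕ)), F (G t) := by
    intro S F
    rw [Finset.sum_image (by
      intro i1 _ i2 _ h
      exact σ.symm.injective (Fin.ext h))]
    apply Finset.sum_congr rfl
    intro i _
    have htn : ((σ.symm i : ℕ)) < n := (σ.symm i).2
    rw [hGdef]
    dsimp only
    rw [dif_pos htn]
    congr 1
    rw [Fin.eta, Equiv.apply_symm_apply]
  have hcardimg : ∀ S : Finset (Fin n), S.card ≤ p →
      (S.image (fun i => (σ.symm i : ℕ))).card ≤ p := by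
    intro S hS
    calc (S.image (fun i => (σ.symm i : ℕ))).card ≤ S.card := Finset.card_image_le
      _ ≤ p := hS
  have hGsq_mono : ∀ a b : ℕ, a ≤ b → (G b)^2 ≤ (G a)^2 := by
    intro a b hab
    have := hGmono a b hab
    nlinarith [hGpos b]
  have htop2 : ∀ S : Finset (Fin n), S.card ≤ p →
      l2norm (restr y S) ^ 2 ≤ l2norm (restr y (blk 0)) ^ 2 := by
    intro S hS
    rw [restr_sum_sq, himg S (fun r => r^2)]
    have h1 := aux_sel hGsq_mono (fun t => sq_nonneg (G t)) (hcardimg S hS)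
    calc ∑ t ∈ S.image (fun i => (σ.symm i : ℕ)), (G t)^2
        ≤ ∑ t ∈ Finset.range p, (G t)^2 := h1
      _ = ∑ t ∈ Finset.Ico (p*0) (p*0+p), (G t)^2 := by
          rw [Finset.range_eq_Ico]; norm_num
      _ = l2norm (restr y (blk 0)) ^ 2 := (hc2 0).symm
  have htop1 : ∀ S : Finset (Fin n), S.card ≤ p →
      l1norm (restr y ((blk 0)ᶜ)) ≤ l1norm (restr y Sᶜ) := by
    intro S hS
    have key : ∀ T : Finset (Fin n), (∑ i ∈ T, ‖y i‖) + l1norm (restr y Tᶜ) = l1norm y := by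
      intro T
      rw [restr_sum_l1]
      exact Finset.sum_add_sum_compl T _
    have hbl0eq : blk 0 = Finset.univ.filter
        (fun i : Fin n => (σ.symm i : ℕ) ∈ Finset.Ico 0 p) := by
      rw [hblk]
      norm_num
    have hblk0sum : ∑ i ∈ blk 0, ‖y i‖ = ∑ t ∈ Finset.range p, G t := by
      rw [hbl0eq, ← hre (fun r => r) rfl 0 p, Finset.range_eq_Ico]
    have h1 : ∑ i ∈ S, ‖y i‖ ≤ ∑ i ∈ blk 0, ‖y i‖ := by
      rw [himg S (fun r => r), hblk0sum]
      exact aux_sel hGmono hGpos (hcardimg S hS)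
    have e1 := key S
    have e2 := key (blk 0)
    linarith
  have h20 : l2norm (restr y (blk 0))^2 = ∑ t ∈ Finset.Ico 0 p, (G t)^2 := by
    have := hc2 0
    norm_num at this ⊢
    exact this
  have hfin : ∑ j ∈ Finset.Icc 1 J, l2norm (restr y (blk j)) ≤
      (1/Real.sqrt p) * l1norm (restr y ((blk 0)ᶜ)) + (1/4) * l2norm (restr y (blk 0)) := by
    have hl2eq : ∀ j, l2norm (restr y (blk j)) =
        Real.sqrt (∑ t ∈ Finset.Ico (p*j) (p*j+p), (G t)^2) := by
      intro j
      rw [← hc2 j, Real.sqrt_sq (l2norm_nonneg _)]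
    have hl20 : l2norm (restr y (blk 0)) = Real.sqrt (∑ t ∈ Finset.Ico 0 p, (G t)^2) := by
      rw [← h20, Real.sqrt_sq (l2norm_nonneg _)]
    calc ∑ j ∈ Finset.Icc 1 J, l2norm (restr y (blk j))
        = ∑ j ∈ Finset.Icc 1 J, Real.sqrt (∑ t ∈ Finset.Ico (p*j) (p*j+p), (G t)^2) :=
          Finset.sum_congr rfl fun j _ => hl2eq j
      _ ≤ (1/Real.sqrt p) * (∑ t ∈ Finset.Ico p (p*J+p), G t)
            + (1/4) * Real.sqrt (∑ t ∈ Finset.Ico 0 p, (G t)^2) :=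
          aux_master hGmono hGpos hp J
      _ = (1/Real.sqrt p) * l1norm (restr y ((blk 0)ᶜ)) + (1/4) * l2norm (restr y (blk 0)) := by
          rw [hc1, hl20]
  exact ⟨blk, hcard, huniq, hdecomp, htop2, htop1, hfin⟩

lemma ipx_zero {n : ℕ} {y z : Fin n → ℂ} (h : ∀ i, y i = 0 ∨ z i = 0) : ipx y z = 0 := by
  unfold ipx
  apply Finset.sum_eq_zero
  intro i _
  rcases h i with h' | h' <;> simp [h']

lemma sq_l2_combo {n : ℕ} (y z : Fin n → ℂ) (t : ℝ) :
    l2norm (fun i => y i + (t:ℂ) * z i) ^ 2 =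
      l2norm y ^2 + 2*t*(ipx y z) + t^2 * l2norm z ^2 := by
  rw [l2norm_sq, l2norm_sq, l2norm_sq]
  exact expand_sum y z t

lemma combo_sparse {n : ℕ} {s : ℕ} {y z : Fin n → ℂ} {S1 S2 : Finset (Fin n)}
    (hS1 : S1.card ≤ s) (hS2 : S2.card ≤ s)
    (hy : ∀ i ∉ S1, y i = 0) (hz : ∀ i ∉ S2, z i = 0) (t : ℝ) :
    IsSparse (2*s) (fun i => y i + (t:ℂ) * z i) := by
  refine ⟨S1 ∪ S2, ?_, ?_⟩
  · calc (S1 ∪ S2).card ≤ S1.card + S2.card := Finset.card_union_le S1 S2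
      _ ≤ 2*s := by omega
  · intro i hi
    rw [Finset.mem_union] at hi
    push_neg at hi
    show y i + (t:ℂ) * z i = 0
    rw [hy i hi.1, hz i hi.2]
    ring

lemma mulvec_combo {m N : ℕ} (A : Matrix (Fin m) (Fin N) ℂ) (x1 x2 : Fin N → ℂ)
    (c1 c2 : Fin m → ℂ) (t : ℝ) :
    (fun r => A.mulVec (fun i => x1 i + (t:ℂ) * x2 i) r + (c1 r + (t:ℂ) * c2 r)) =
      (fun r => (A.mulVec x1 + c1) r + (t:ℂ) * ((A.mulVec x2 + c2) r)) := by
  funext r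
  have h1 : (fun i => x1 i + (t:ℂ) * x2 i) = x1 + (t:ℂ) • x2 := by
    funext i; simp [Pi.smul_apply, smul_eq_mul]
  rw [h1, Matrix.mulVec_add, Matrix.mulVec_smul]
  simp [Pi.smul_apply, smul_eq_mul]
  ring

/-- The key RIP cross-term bound. -/
lemma cross_bound {m N : ℕ} {A : Matrix (Fin m) (Fin N) ℂ} {s k : ℕ} {δ : ℝ}
    (hRIP : RIPCor A (2*s) (2*k) δ)
    {x1 x2 : Fin N → ℂ} {c1 c2 : Fin m → ℂ}
    {S1 S2 : Finset (Fin N)} {T1 T2 : Finset (Fin m)}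
    (hS1 : S1.card ≤ s) (hS2 : S2.card ≤ s) (hT1 : T1.card ≤ k) (hT2 : T2.card ≤ k)
    (hx1 : ∀ i ∉ S1, x1 i = 0) (hx2 : ∀ i ∉ S2, x2 i = 0)
    (hc1 : ∀ i ∉ T1, c1 i = 0) (hc2 : ∀ i ∉ T2, c2 i = 0)
    (hdS : ∀ i, x1 i = 0 ∨ x2 i = 0) (hdT : ∀ i, c1 i = 0 ∨ c2 i = 0) :
    (ipx (A.mulVec x1 + c1) (A.mulVec x2 + c2))^2 * (l2norm x1^2 + l2norm c1^2) ≤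
      (l2norm (A.mulVec x1 + c1)^2 - (1-δ)*(l2norm x1^2 + l2norm c1^2)) *
      ((1+δ)*(l2norm x1^2 + l2norm c1^2) - l2norm (A.mulVec x1 + c1)^2) *
      (l2norm x2^2 + l2norm c2^2) := by
  set B1 := A.mulVec x1 + c1 with hB1
  set B2 := A.mulVec x2 + c2 with hB2
  set n1sq := l2norm x1^2 + l2norm c1^2 with hn1sq
  set n2sq := l2norm x2^2 + l2norm c2^2 with hn2sq
  set a := l2norm B1 ^2 with ha
  set d := l2norm B2 ^2 with hd
  set cc := ipx B1 B2 with hcc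
  -- combined RIP for all t
  have hRIPt : ∀ t : ℝ,
      (1-δ)*(n1sq + t^2*n2sq) ≤ a + 2*t*cc + t^2*d ∧
      a + 2*t*cc + t^2*d ≤ (1+δ)*(n1sq + t^2*n2sq) := by
    intro t
    have hsp1 := combo_sparse hS1 hS2 hx1 hx2 t
    have hsp2 := combo_sparse hT1 hT2 hc1 hc2 t
    have hrip := hRIP _ _ hsp1 hsp2
    have hlhs : l2norm (fun i => x1 i + (t:ℂ) * x2 i) ^2
        + l2norm (fun i => c1 i + (t:ℂ) * c2 i) ^2 = n1sq + t^2*n2sq := by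
      rw [sq_l2_combo, sq_l2_combo, ipx_zero hdS, ipx_zero hdT, hn1sq, hn2sq]
      ring
    have hrhs : l2norm (A.mulVec (fun i => x1 i + (t:ℂ) * x2 i)
        + (fun i => c1 i + (t:ℂ) * c2 i)) ^2 = a + 2*t*cc + t^2*d := by
      have he : A.mulVec (fun i => x1 i + (t:ℂ) * x2 i) + (fun i => c1 i + (t:ℂ) * c2 i)
          = (fun r => B1 r + (t:ℂ) * (B2 r)) := by
        have := mulvec_combo A x1 x2 c1 c2 t
        funext r
        have h2 := congrFun this r
        simpa [hB1, hB2] using h2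
      rw [he, sq_l2_combo, ha, hd, hcc]
    constructor
    · calc (1-δ)*(n1sq + t^2*n2sq) = (1-δ)*(l2norm (fun i => x1 i + (t:ℂ) * x2 i) ^2
            + l2norm (fun i => c1 i + (t:ℂ) * c2 i) ^2) := by rw [hlhs]
        _ ≤ l2norm (A.mulVec (fun i => x1 i + (t:ℂ) * x2 i)
            + (fun i => c1 i + (t:ℂ) * c2 i)) ^2 := hrip.1
        _ = a + 2*t*cc + t^2*d := hrhs
    · calc a + 2*t*cc + t^2*d
          = l2norm (A.mulVec (fun i => x1 i + (t:ℂ) * x2 i)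
            + (fun i => c1 i + (t:ℂ) * c2 i)) ^2 := hrhs.symm
        _ ≤ (1+δ)*(l2norm (fun i => x1 i + (t:ℂ) * x2 i) ^2
            + l2norm (fun i => c1 i + (t:ℂ) * c2 i) ^2) := hrip.2
        _ = (1+δ)*(n1sq + t^2*n2sq) := by rw [hlhs]
  have hq1 : cc^2 ≤ (a - (1-δ)*n1sq) * (d - (1-δ)*n2sq) := by
    apply aux_quad
    intro t
    have := (hRIPt t).1
    nlinarith [this]
  have hq2 : cc^2 ≤ ((1+δ)*n1sq - a) * ((1+δ)*n2sq - d) := by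
    have h := aux_quad (p := (1+δ)*n1sq - a) (q := (1+δ)*n2sq - d) (c := -cc) (by
      intro t
      have := (hRIPt t).2
      nlinarith [this])
    nlinarith [h]
  have hp1 : 0 ≤ a - (1-δ)*n1sq := by have := (hRIPt 0).1; nlinarith
  have hp2 : 0 ≤ (1+δ)*n1sq - a := by have := (hRIPt 0).2; nlinarith
  have hn1 : 0 ≤ n1sq := by rw [hn1sq]; positivity
  have := aux_cross_scalar (p1 := a - (1-δ)*n1sq) (p2 := (1+δ)*n1sq - a)
    (q1 := d - (1-δ)*n2sq) (q2 := (1+δ)*n2sq - d) (cc := cc) (n1sq := n1sq) (n2sq := n2sq)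
    (by ring) hq1 hq2 hp1 hp2 hn1
  linarith [this]

lemma aux_sqrt_add {p q : ℝ} (hp : 0 ≤ p) (hq : 0 ≤ q) : Real.sqrt (p^2+q^2) ≤ p + q := by
  have h : p^2+q^2 ≤ (p+q)^2 := by nlinarith
  calc Real.sqrt (p^2+q^2) ≤ Real.sqrt ((p+q)^2) := Real.sqrt_le_sqrt h
    _ = p + q := Real.sqrt_sq (by linarith)

lemma aux_add_le_sqrt2 {p q : ℝ} (hp : 0 ≤ p) (hq : 0 ≤ q) :
    p + q ≤ Real.sqrt 2 * Real.sqrt (p^2+q^2) := by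
  have h2 : Real.sqrt 2 * Real.sqrt (p^2+q^2) = Real.sqrt (2*(p^2+q^2)) := by
    rw [← Real.sqrt_mul (by norm_num : (0:ℝ) ≤ 2)]
  rw [h2]
  have h : (p+q)^2 ≤ 2*(p^2+q^2) := by nlinarith [sq_nonneg (p-q)]
  calc p + q = Real.sqrt ((p+q)^2) := (Real.sqrt_sq (by linarith)).symm
    _ ≤ Real.sqrt (2*(p^2+q^2)) := Real.sqrt_le_sqrt h

lemma mulvec_sum {m N : ℕ} (A : Matrix (Fin m) (Fin N) ℂ) {κ : Type*} (F : Finset κ)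
    (f : κ → (Fin N → ℂ)) : A.mulVec (∑ j ∈ F, f j) = ∑ j ∈ F, A.mulVec (f j) := by
  induction F using Finset.cons_induction with
  | empty => simp [Matrix.mulVec_zero]
  | cons a F ha ih => rw [Finset.sum_cons, Finset.sum_cons, Matrix.mulVec_add, ih]


set_option maxHeartbeats 1000000 in
/-- the RIP for the sparse corruptions problem of order (2s,2k) implies
the ℓ²-robust NSP of order (s,k), with explicit constants ρ and τ satisfying
0 < ρ < 1 and τ > 0. -/
theorem rip_implies_l2RNSP {N m : ℕ} (s k : ℕ)
    (hs1 : 1 ≤ s) (hsN : s ≤ N) (hk1 : 1 ≤ k) (hkm : k ≤ m) (hmN : m ≤ N)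
    (lam : ℝ) (hlam : 0 < lam)
    (A : Matrix (Fin m) (Fin N) ℂ) (δ : ℝ) (hδ0 : 0 < δ)
    (hRIP : RIPCor A (2 * s) (2 * k) δ)
    (hδ : δ < 1 / Real.sqrt (1 + (1 / (2 * Real.sqrt 2) + Real.sqrt (etaSK s k lam)) ^ 2)) :
    0 < 2 * Real.sqrt 2 * δ * Real.sqrt (etaSK s k lam) /
        (2 * Real.sqrt 2 * Real.sqrt (1 - δ ^ 2) - δ) ∧
    2 * Real.sqrt 2 * δ * Real.sqrt (etaSK s k lam) /
        (2 * Real.sqrt 2 * Real.sqrt (1 - δ ^ 2) - δ) < 1 ∧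
    0 < 2 * Real.sqrt 2 * Real.sqrt (1 + δ) /
        (2 * Real.sqrt 2 * Real.sqrt (1 - δ ^ 2) - δ) ∧
    L2RNSP A s k lam
      (2 * Real.sqrt 2 * δ * Real.sqrt (etaSK s k lam) /
        (2 * Real.sqrt 2 * Real.sqrt (1 - δ ^ 2) - δ))
      (2 * Real.sqrt 2 * Real.sqrt (1 + δ) /
        (2 * Real.sqrt 2 * Real.sqrt (1 - δ ^ 2) - δ)) := by

  classical
  have hspos : (0:ℝ) < (s:ℝ) := by exact_mod_cast hs1
  have hkpos : (0:ℝ) < (k:ℝ) := by exact_mod_cast hk1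
  have hminpos : (0:ℝ) < min (s:ℝ) (lam^2*k) := lt_min hspos (by positivity)
  have hWpos : (0:ℝ) < (s:ℝ) + lam^2*k := by positivity
  have hηpos : 0 < etaSK s k lam := div_pos hWpos hminpos
  have h2s : (0:ℝ) < Real.sqrt 2 := Real.sqrt_pos.2 (by norm_num)
  have h22 : Real.sqrt 2 * Real.sqrt 2 = 2 := Real.mul_self_sqrt (by norm_num)
  set η := etaSK s k lam with hηdef
  have hsqηpos : 0 < Real.sqrt η := Real.sqrt_pos.2 hηpos
  set X := 1/(2*Real.sqrt 2) + Real.sqrt η with hXdef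
  have hXpos : 0 < X := by positivity
  have hYpos : 0 < Real.sqrt (1 + X^2) := Real.sqrt_pos.2 (by positivity)
  have h1 : δ * Real.sqrt (1+X^2) < 1 := by
    have := (lt_div_iff₀ hYpos).1 hδ
    linarith
  have hkey : δ*(1/(2*Real.sqrt 2)) + δ*Real.sqrt η < Real.sqrt (1 - δ^2) := by
    have hδY : 0 < δ * Real.sqrt (1+X^2) := mul_pos hδ0 hYpos
    have h2 : (δ * Real.sqrt (1+X^2))*(δ * Real.sqrt (1+X^2)) < 1*1 :=
      mul_lt_mul'' h1 h1 hδY.le hδY.le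
    have h3 : Real.sqrt (1+X^2)^2 = 1 + X^2 := Real.sq_sqrt (by positivity)
    have he : (δ * Real.sqrt (1+X^2))*(δ * Real.sqrt (1+X^2)) = δ^2 + (δ*X)^2 := by
      have : (δ * Real.sqrt (1+X^2))*(δ * Real.sqrt (1+X^2))
          = δ^2 * (Real.sqrt (1+X^2)^2) := by ring
      rw [this, h3]; ring
    have h4 : (δ*X)^2 < 1 - δ^2 := by rw [he] at h2; linarith
    have h5 : δ*X < Real.sqrt (1-δ^2) := by
      calc δ*X = Real.sqrt ((δ*X)^2) := (Real.sqrt_sq (by positivity)).symm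
        _ < Real.sqrt (1-δ^2) := Real.sqrt_lt_sqrt (sq_nonneg _) h4
    calc δ*(1/(2*Real.sqrt 2)) + δ*Real.sqrt η = δ*X := by rw [hXdef]; ring
      _ < Real.sqrt (1-δ^2) := h5
  have hδ1 : δ < 1 := by
    have h3 : (1:ℝ) ≤ Real.sqrt (1+X^2) := by
      calc (1:ℝ) = Real.sqrt 1 := Real.sqrt_one.symm
        _ ≤ Real.sqrt (1+X^2) := Real.sqrt_le_sqrt (by nlinarith [sq_nonneg X])
    have h4 : δ*1 ≤ δ*Real.sqrt (1+X^2) := mul_le_mul_of_nonneg_left h3 hδ0.le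
    linarith
  set D := Real.sqrt (1-δ^2) - δ*(1/(2*Real.sqrt 2)) with hDdef
  have hDgt : δ*Real.sqrt η < D := by rw [hDdef]; linarith
  have hDpos : 0 < D := lt_trans (by positivity) hDgt
  have hD2 : 2*Real.sqrt 2*Real.sqrt (1-δ^2) - δ = (2*Real.sqrt 2)*D := by
    rw [hDdef]
    field_simp
  have h2s2 : (0:ℝ) < 2*Real.sqrt 2 := by positivity
  have hρeq : 2*Real.sqrt 2*δ*Real.sqrt η / (2*Real.sqrt 2*Real.sqrt (1-δ^2) - δ)
      = (δ*Real.sqrt η)/D := by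
    rw [hD2, show 2*Real.sqrt 2*δ*Real.sqrt η = (2*Real.sqrt 2)*(δ*Real.sqrt η) by ring]
    exact mul_div_mul_left _ _ (ne_of_gt h2s2)
  have hτeq : 2*Real.sqrt 2*Real.sqrt (1+δ) / (2*Real.sqrt 2*Real.sqrt (1-δ^2) - δ)
      = Real.sqrt (1+δ)/D := by
    rw [hD2, show 2*Real.sqrt 2*Real.sqrt (1+δ) = (2*Real.sqrt 2)*(Real.sqrt (1+δ)) by ring]
    exact mul_div_mul_left _ _ (ne_of_gt h2s2)
  refine ⟨?_, ?_, ?_, ?_⟩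
  · rw [hρeq]
    exact div_pos (by positivity) hDpos
  · rw [hρeq]
    exact (div_lt_one hDpos).2 hDgt
  · rw [hτeq]
    exact div_pos (Real.sqrt_pos.2 (by linarith)) hDpos
  -- the main RNSP proof
  intro x c S T hS hT
  obtain ⟨bx, hbxcard, hbxuniq, hbxdec, hbxtop2, hbxtop1, hbxtail⟩ :=
    blocks_exist x hs1 N le_rfl
  obtain ⟨bc, hbccard, hbcuniq, hbcdec, hbctop2, hbctop1, hbctail⟩ :=
    blocks_exist c hk1 N hmN
  set x0 := restr x (bx 0) with hx0def
  set c0 := restr c (bc 0) with hc0def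
  set n1sq := l2norm x0^2 + l2norm c0^2 with hn1sqdef
  set n1 := Real.sqrt n1sq with hn1def
  have hn1sq0 : 0 ≤ n1sq := by rw [hn1sqdef]; positivity
  have hn10 : 0 ≤ n1 := Real.sqrt_nonneg _
  set b := l2norm (A.mulVec x + c) with hbdef
  have hb0 : 0 ≤ b := l2norm_nonneg _
  set μ := Real.sqrt (min (s:ℝ) (lam^2*k)) with hμdef
  have hμpos : 0 < μ := Real.sqrt_pos.2 hminpos
  set Q0 := l1norm (restr x ((bx 0)ᶜ)) + lam * l1norm (restr c ((bc 0)ᶜ)) with hQ0def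
  set Q := l1norm (restr x Sᶜ) + lam * l1norm (restr c Tᶜ) with hQdef
  have hQ0nonneg : 0 ≤ Q0 := by
    rw [hQ0def]
    exact add_nonneg (l1norm_nonneg _) (mul_nonneg hlam.le (l1norm_nonneg _))
  have hQ0Q : Q0 ≤ Q := by
    rw [hQ0def, hQdef]
    have h1 := hbxtop1 S hS
    have h2 := hbctop1 T hT
    exact add_le_add h1 (mul_le_mul_of_nonneg_left h2 hlam.le)
  have hLHS : Real.sqrt (l2norm (restr x S)^2 + l2norm (restr c T)^2) ≤ n1 := by
    rw [hn1def]
    exact Real.sqrt_le_sqrt (add_le_add (hbxtop2 S hS) (hbctop2 T hT))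
  set r2 := Real.sqrt (1+δ) with hr2def
  have hr2pos : 0 < r2 := Real.sqrt_pos.2 (by linarith)
  -- main inequality: n1 * D ≤ r2*b + (δ/μ)*Q0
  have hn1D : n1*D ≤ r2*b + (δ/μ)*Q0 := by
    rcases eq_or_lt_of_le hn1sq0 with hz | hpos
    · -- degenerate case
      have : n1 = 0 := by rw [hn1def, ← hz, Real.sqrt_zero]
      rw [this, zero_mul]
      have hq : 0 ≤ (δ/μ)*Q0 := mul_nonneg (by positivity) hQ0nonneg
      have hrb : 0 ≤ r2*b := mul_nonneg hr2pos.le hb0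
      linarith
    -- main case
    set a := l2norm (A.mulVec x0 + c0)^2 with hadef
    have hsx0 : ∀ i ∉ bx 0, x0 i = 0 := by
      intro i hi; simp [hx0def, restr, hi]
    have hsc0 : ∀ i ∉ bc 0, c0 i = 0 := by
      intro i hi; simp [hc0def, restr, hi]
    have hRIP0 := hRIP x0 c0 ⟨bx 0, le_trans (hbxcard 0) (by omega), hsx0⟩
      ⟨bc 0, le_trans (hbccard 0) (by omega), hsc0⟩
    have hA1 : (1-δ)*n1sq ≤ a := hRIP0.1
    have hA2 : a ≤ (1+δ)*n1sq := hRIP0.2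
    have ha_pos : 0 < a := lt_of_lt_of_le (mul_pos (by linarith) hpos) hA1
    have ha0 : 0 ≤ a := ha_pos.le
    set PP := (a - (1-δ)*n1sq)*((1+δ)*n1sq - a)/n1sq with hPPdef
    have hp1 : 0 ≤ a - (1-δ)*n1sq := by linarith
    have hp2 : 0 ≤ (1+δ)*n1sq - a := by linarith
    have hPP0 : 0 ≤ PP := div_nonneg (mul_nonneg hp1 hp2) hpos.le
    have hPPn : PP * n1sq = (a - (1-δ)*n1sq)*((1+δ)*n1sq - a) :=
      div_mul_cancel₀ _ (ne_of_gt hpos)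
    -- decomposition of the measurement vector
    have hdecompB : A.mulVec x + c = ∑ j ∈ insert 0 (Finset.Icc 1 N),
        (A.mulVec (restr x (bx j)) + restr c (bc j)) := by
      have hins : Finset.range (N+1) = insert 0 (Finset.Icc 1 N) := by
        ext j
        simp only [Finset.mem_range, Finset.mem_insert, Finset.mem_Icc]
        omega
      have hxs : A.mulVec x = ∑ j ∈ Finset.range (N+1), A.mulVec (restr x (bx j)) := by
        conv_lhs => rw [hbxdec]
        exact mulvec_sum A _ _
      calc A.mulVec x + c
          = (∑ j ∈ Finset.range (N+1), A.mulVec (restr x (bx j)))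
            + ∑ j ∈ Finset.range (N+1), restr c (bc j) := by
            rw [← hxs]
            conv_lhs => rw [hbcdec]
        _ = ∑ j ∈ Finset.range (N+1), (A.mulVec (restr x (bx j)) + restr c (bc j)) :=
            Finset.sum_add_distrib.symm
        _ = ∑ j ∈ insert 0 (Finset.Icc 1 N),
            (A.mulVec (restr x (bx j)) + restr c (bc j)) := by rw [hins]
    have h0notin : (0:ℕ) ∉ Finset.Icc 1 N := by simp
    have hipx_split : ipx (A.mulVec x0 + c0) (A.mulVec x + c) = a
        + ∑ j ∈ Finset.Icc 1 N,
          ipx (A.mulVec x0 + c0) (A.mulVec (restr x (bx j)) + restr c (bc j)) := by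
      rw [hdecompB, ipx_sum_right, Finset.sum_insert h0notin]
      congr 1
      rw [ipx_self, hadef, l2norm_sq]
    -- per-block cross bound
    have hperj : ∀ j ∈ Finset.Icc 1 N,
        -(Real.sqrt PP * Real.sqrt (l2norm (restr x (bx j))^2 + l2norm (restr c (bc j))^2))
          ≤ ipx (A.mulVec x0 + c0) (A.mulVec (restr x (bx j)) + restr c (bc j)) := by
      intro j hj
      have hj1 : 1 ≤ j := (Finset.mem_Icc.1 hj).1
      have hsxj : ∀ i ∉ bx j, restr x (bx j) i = 0 := fun i hi => by simp [restr, hi]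
      have hscj : ∀ i ∉ bc j, restr c (bc j) i = 0 := fun i hi => by simp [restr, hi]
      have hdSj : ∀ i, x0 i = 0 ∨ restr x (bx j) i = 0 := by
        intro i
        by_cases h0 : i ∈ bx 0
        · right
          by_cases hjj : i ∈ bx j
          · exact absurd (hbxuniq i 0 j h0 hjj) (by omega)
          · simp [restr, hjj]
        · left; simp [hx0def, restr, h0]
      have hdTj : ∀ i, c0 i = 0 ∨ restr c (bc j) i = 0 := by
        intro i
        by_cases h0 : i ∈ bc 0
        · right
          by_cases hjj : i ∈ bc j
          · exact absurd (hbcuniq i 0 j h0 hjj) (by omega)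
          · simp [restr, hjj]
        · left; simp [hc0def, restr, h0]
      have hcb := cross_bound hRIP (hbxcard 0) (hbxcard j) (hbccard 0) (hbccard j)
        hsx0 hsxj hsc0 hscj hdSj hdTj
      set cc := ipx (A.mulVec x0 + c0) (A.mulVec (restr x (bx j)) + restr c (bc j)) with hccdef
      set n2 := l2norm (restr x (bx j))^2 + l2norm (restr c (bc j))^2 with hn2def
      have hn20 : 0 ≤ n2 := by rw [hn2def]; positivity
      have hccsq : cc^2 ≤ PP * n2 := by
        have h' : cc^2*n1sq ≤ (PP*n2)*n1sq := by
          rw [show (PP*n2)*n1sq = (PP*n1sq)*n2 by ring, hPPn]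
          calc cc^2*n1sq ≤ (l2norm (A.mulVec x0 + c0)^2 - (1-δ)*(l2norm x0^2 + l2norm c0^2)) *
                ((1+δ)*(l2norm x0^2 + l2norm c0^2) - l2norm (A.mulVec x0 + c0)^2) * n2 := hcb
            _ = (a - (1-δ)*n1sq)*((1+δ)*n1sq - a)*n2 := by rw [← hadef, ← hn1sqdef]
        exact le_of_mul_le_mul_right h' hpos
      have h1 : -cc ≤ Real.sqrt PP * Real.sqrt n2 := by
        calc -cc ≤ |cc| := neg_le_abs cc
          _ = Real.sqrt (cc^2) := (Real.sqrt_sq_eq_abs cc).symm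
          _ ≤ Real.sqrt (PP*n2) := Real.sqrt_le_sqrt hccsq
          _ = Real.sqrt PP * Real.sqrt n2 := Real.sqrt_mul hPP0 n2
      linarith
    set Stail := ∑ j ∈ Finset.Icc 1 N,
      Real.sqrt (l2norm (restr x (bx j))^2 + l2norm (restr c (bc j))^2) with hSdef
    have hS0 : 0 ≤ Stail := Finset.sum_nonneg fun j _ => Real.sqrt_nonneg _
    have hsum_lower : -(Real.sqrt PP * Stail) ≤ ∑ j ∈ Finset.Icc 1 N,
        ipx (A.mulVec x0 + c0) (A.mulVec (restr x (bx j)) + restr c (bc j)) := by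
      have h1 := Finset.sum_le_sum hperj
      calc -(Real.sqrt PP * Stail)
          = ∑ j ∈ Finset.Icc 1 N, -(Real.sqrt PP *
              Real.sqrt (l2norm (restr x (bx j))^2 + l2norm (restr c (bc j))^2)) := by
            rw [Finset.sum_neg_distrib, ← Finset.mul_sum, hSdef]
        _ ≤ _ := h1
    have hCS : ipx (A.mulVec x0 + c0) (A.mulVec x + c) ≤ Real.sqrt a * b := by
      calc ipx (A.mulVec x0 + c0) (A.mulVec x + c)
          ≤ l2norm (A.mulVec x0 + c0) * l2norm (A.mulVec x + c) := ipx_CS _ _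
        _ = Real.sqrt a * b := by
            rw [hbdef, hadef, Real.sqrt_sq (l2norm_nonneg _)]
    have hachain : a ≤ Real.sqrt a * b + Real.sqrt PP * Stail := by
      have := hipx_split
      linarith [hsum_lower, hCS, hipx_split.symm.le, hipx_split.le]
    -- tail bound
    have hSbound : Stail ≤ (1/μ)*Q0 + (Real.sqrt 2/4)*n1 := by
      have hstep1 : Stail ≤ (∑ j ∈ Finset.Icc 1 N, l2norm (restr x (bx j)))
          + (∑ j ∈ Finset.Icc 1 N, l2norm (restr c (bc j))) := by
        rw [← Finset.sum_add_distrib]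
        apply Finset.sum_le_sum
        intro j _
        exact aux_sqrt_add (l2norm_nonneg _) (l2norm_nonneg _)
      have hsqs : (0:ℝ) < Real.sqrt s := Real.sqrt_pos.2 hspos
      have hsqk : (0:ℝ) < Real.sqrt k := Real.sqrt_pos.2 hkpos
      have hμs : μ ≤ Real.sqrt s := by
        rw [hμdef]
        exact Real.sqrt_le_sqrt (min_le_left _ _)
      have hμk : μ ≤ lam * Real.sqrt k := by
        have he : Real.sqrt (lam^2*(k:ℝ)) = lam*Real.sqrt k := by
          rw [Real.sqrt_mul (sq_nonneg lam) (k:ℝ), Real.sqrt_sq hlam.le]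
        rw [hμdef, ← he]
        exact Real.sqrt_le_sqrt (min_le_right _ _)
      have hcoefs : (1/Real.sqrt s) ≤ 1/μ := one_div_le_one_div_of_le hμpos hμs
      have hcoefk : (1/Real.sqrt k) ≤ lam/μ := by
        rw [div_le_div_iff₀ hsqk hμpos, one_mul]
        exact hμk
      have hL1x : 0 ≤ l1norm (restr x ((bx 0)ᶜ)) := l1norm_nonneg _
      have hL1c : 0 ≤ l1norm (restr c ((bc 0)ᶜ)) := l1norm_nonneg _
      have hb1 : (1/Real.sqrt s) * l1norm (restr x ((bx 0)ᶜ)) ≤ (1/μ) * l1norm (restr x ((bx 0)ᶜ)) :=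
        mul_le_mul_of_nonneg_right hcoefs hL1x
      have hb2 : (1/Real.sqrt k) * l1norm (restr c ((bc 0)ᶜ)) ≤ (lam/μ) * l1norm (restr c ((bc 0)ᶜ)) :=
        mul_le_mul_of_nonneg_right hcoefk hL1c
      have hl2sum : l2norm x0 + l2norm c0 ≤ Real.sqrt 2 * n1 := by
        rw [hn1def, hn1sqdef]
        exact aux_add_le_sqrt2 (l2norm_nonneg x0) (l2norm_nonneg c0)
      have hQ0e : (1/μ) * l1norm (restr x ((bx 0)ᶜ)) + (lam/μ) * l1norm (restr c ((bc 0)ᶜ))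
          = (1/μ)*Q0 := by
        rw [hQ0def]
        ring
      have htx := hbxtail
      have htc := hbctail
      calc Stail ≤ (∑ j ∈ Finset.Icc 1 N, l2norm (restr x (bx j)))
            + (∑ j ∈ Finset.Icc 1 N, l2norm (restr c (bc j))) := hstep1
        _ ≤ ((1/Real.sqrt s) * l1norm (restr x ((bx 0)ᶜ)) + (1/4) * l2norm x0)
            + ((1/Real.sqrt k) * l1norm (restr c ((bc 0)ᶜ)) + (1/4) * l2norm c0) :=
            add_le_add htx htc
        _ ≤ ((1/μ) * l1norm (restr x ((bx 0)ᶜ)) + (lam/μ) * l1norm (restr c ((bc 0)ᶜ)))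
            + (1/4) * (l2norm x0 + l2norm c0) := by linarith
        _ ≤ (1/μ)*Q0 + (1/4) * (Real.sqrt 2 * n1) := by
            rw [← hQ0e]
            have : (1/4) * (l2norm x0 + l2norm c0) ≤ (1/4) * (Real.sqrt 2 * n1) := by
              linarith
            linarith
        _ = (1/μ)*Q0 + (Real.sqrt 2/4)*n1 := by ring
    -- endgame
    set r1 := Real.sqrt (1-δ) with hr1def
    have hr1pos : 0 < r1 := Real.sqrt_pos.2 (by linarith)
    have hr1r2 : r1*r2 = Real.sqrt (1-δ^2) := by
      rw [hr1def, hr2def, ← Real.sqrt_mul (by linarith : (0:ℝ) ≤ 1-δ) (1+δ)]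
      congr 1
      ring
    have hsa : r1*n1 ≤ Real.sqrt a := by
      have h' : Real.sqrt ((1-δ)*n1sq) ≤ Real.sqrt a := Real.sqrt_le_sqrt hA1
      rw [Real.sqrt_mul (by linarith : (0:ℝ) ≤ 1-δ) n1sq] at h'
      exact h'
    have hsa0 : 0 ≤ Real.sqrt a := Real.sqrt_nonneg a
    have hcoef2 : Real.sqrt PP*(n1*(r1*r2)) ≤ δ*a := by
      have hp1p2 : 0 ≤ (a-(1-δ)*n1sq)*((1+δ)*n1sq-a) := mul_nonneg hp1 hp2
      have e1 : Real.sqrt PP*n1 = Real.sqrt ((a-(1-δ)*n1sq)*((1+δ)*n1sq-a)) := by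
        rw [← hPPn, Real.sqrt_mul hPP0 n1sq, hn1def]
      have e2 : Real.sqrt PP*(n1*(r1*r2))
          = Real.sqrt ((a-(1-δ)*n1sq)*((1+δ)*n1sq-a)*(1-δ^2)) := by
        rw [show Real.sqrt PP*(n1*(r1*r2)) = (Real.sqrt PP*n1)*(r1*r2) by ring, e1, hr1r2,
          Real.sqrt_mul hp1p2]
      have hident : (a-(1-δ)*n1sq)*((1+δ)*n1sq-a)*(1-δ^2) ≤ (δ*a)^2 := by
        have hidq : (δ*a)^2 - (a-(1-δ)*n1sq)*((1+δ)*n1sq-a)*(1-δ^2)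
            = (a - (1-δ^2)*n1sq)^2 := by ring
        have hsq := sq_nonneg (a - (1-δ^2)*n1sq)
        linarith
      rw [e2]
      calc Real.sqrt ((a-(1-δ)*n1sq)*((1+δ)*n1sq-a)*(1-δ^2))
          ≤ Real.sqrt ((δ*a)^2) := Real.sqrt_le_sqrt hident
        _ = δ*a := Real.sqrt_sq (by positivity)
    have hnn : 0 ≤ n1*(r1*r2) := by positivity
    have hrb0 : 0 ≤ r2*b := mul_nonneg hr2pos.le hb0
    have hbnd1 : Real.sqrt a*(n1*r1) ≤ a := by
      have h' : Real.sqrt a*(n1*r1) ≤ Real.sqrt a*Real.sqrt a := by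
        have : n1*r1 = r1*n1 := by ring
        rw [this]
        exact mul_le_mul_of_nonneg_left hsa hsa0
      rw [Real.mul_self_sqrt ha0] at h'
      exact h'
    have hmul : a*(n1*(r1*r2)) ≤ a*(r2*b) + a*(δ*Stail) := by
      calc a*(n1*(r1*r2)) ≤ (Real.sqrt a*b + Real.sqrt PP*Stail)*(n1*(r1*r2)) :=
            mul_le_mul_of_nonneg_right hachain hnn
        _ = (Real.sqrt a*(n1*r1))*(r2*b) + (Real.sqrt PP*(n1*(r1*r2)))*Stail := by ring
        _ ≤ a*(r2*b) + (δ*a)*Stail :=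
            add_le_add (mul_le_mul_of_nonneg_right hbnd1 hrb0)
              (mul_le_mul_of_nonneg_right hcoef2 hS0)
        _ = a*(r2*b) + a*(δ*Stail) := by ring
    have hcancel : n1*(r1*r2) ≤ r2*b + δ*Stail := by
      have h' : a*(n1*(r1*r2)) ≤ a*(r2*b + δ*Stail) := by
        rw [mul_add]
        exact hmul
      exact le_of_mul_le_mul_left h' ha_pos
    have h24 : Real.sqrt 2/4 = 1/(2*Real.sqrt 2) := by
      rw [div_eq_div_iff (by norm_num : (4:ℝ) ≠ 0) (by positivity : (2*Real.sqrt 2) ≠ 0)]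
      calc Real.sqrt 2*(2*Real.sqrt 2) = 2*(Real.sqrt 2*Real.sqrt 2) := by ring
        _ = 1*4 := by rw [h22]; norm_num
    have hSdel : δ*Stail ≤ (δ/μ)*Q0 + (δ*(1/(2*Real.sqrt 2)))*n1 := by
      have h' := mul_le_mul_of_nonneg_left hSbound hδ0.le
      have e5 : δ*((1/μ)*Q0 + Real.sqrt 2/4*n1) = (δ/μ)*Q0 + (δ*(1/(2*Real.sqrt 2)))*n1 := by
        rw [← h24]
        ring
      linarith [e5 ▸ h']
    have eD : n1*D = n1*(r1*r2) - (δ*(1/(2*Real.sqrt 2)))*n1 := by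
      rw [hDdef, hr1r2]
      ring
    rw [eD]
    linarith
  -- conclude
  have hfrac : n1 ≤ (r2*b + (δ/μ)*Q0)/D := (le_div_iff₀ hDpos).2 (by linarith)
  have hsplitfrac : (r2*b + (δ/μ)*Q0)/D = (r2/D)*b + (δ/(μ*D))*Q0 := by
    field_simp
  have hQcoef : 0 ≤ δ/(μ*D) := by positivity
  have hηsqrt : Real.sqrt η = Real.sqrt ((s:ℝ)+lam^2*k) / μ := by
    rw [hηdef, etaSK, Real.sqrt_div hWpos.le, hμdef]
  have hsqW : 0 < Real.sqrt ((s:ℝ)+lam^2*k) := Real.sqrt_pos.2 hWpos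
  have hcoefQ : (2*Real.sqrt 2*δ*Real.sqrt η / (2*Real.sqrt 2*Real.sqrt (1-δ^2) - δ))
      / Real.sqrt ((s:ℝ)+lam^2*k) = δ/(μ*D) := by
    rw [hρeq, hηsqrt]
    field_simp
  calc Real.sqrt (l2norm (restr x S)^2 + l2norm (restr c T)^2)
      ≤ n1 := hLHS
    _ ≤ (r2*b + (δ/μ)*Q0)/D := hfrac
    _ = (r2/D)*b + (δ/(μ*D))*Q0 := hsplitfrac
    _ ≤ (r2/D)*b + (δ/(μ*D))*Q := by
        have := mul_le_mul_of_nonneg_left hQ0Q hQcoef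
        linarith
    _ = (2*Real.sqrt 2*δ*Real.sqrt η / (2*Real.sqrt 2*Real.sqrt (1-δ^2) - δ)
          / Real.sqrt ((s:ℝ)+lam^2*k)) * Q
        + (2*Real.sqrt 2*Real.sqrt (1+δ) / (2*Real.sqrt 2*Real.sqrt (1-δ^2) - δ)) * b := by
        rw [hcoefQ, hτeq, hr2def]
        ring
end

section
/- Let 1 ≤ s ≤ N, 1 ≤ k ≤ m, K > 0 and 0 < δ < 1. Suppose A ∈ ℂ^{m×N} has all entries bounded by |A_{ij}| ≤ K/√m, satisfies the Restricted Isometry Property for sparse vectors of order s with constant δ_s ≤ δ/√2, and that m ≥ 8·δ^{−2}·K²·s·k. Then A has the Restricted Isometry Property for the sparse corruptions problem of order (s,k) with constant δ_{s,k} ≤ δ. -/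
open Finset Matrix MeasureTheory

lemma l2sq_aux {n : ℕ} (x : Fin n → ℂ) : l2norm x ^ 2 = ∑ i, ‖x i‖ ^ 2 := by
  unfold l2norm; rw [Real.sq_sqrt]; positivity

lemma l1nn_aux {n : ℕ} (x : Fin n → ℂ) : 0 ≤ l1norm x := by
  unfold l1norm; positivity

lemma l1_sq_le_aux {n s : ℕ} {x : Fin n → ℂ} (h : IsSparse s x) :
    l1norm x ^ 2 ≤ s * l2norm x ^ 2 := by
  obtain ⟨S, hcard, hz⟩ := h
  have hl1 : l1norm x = ∑ i ∈ S, ‖x i‖ := by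
    unfold l1norm
    refine (Finset.sum_subset (Finset.subset_univ S) ?_).symm
    intro i _ hi; rw [hz i hi, norm_zero]
  rw [hl1, l2sq_aux]
  calc (∑ i ∈ S, ‖x i‖)^2 ≤ S.card * ∑ i ∈ S, ‖x i‖^2 := sq_sum_le_card_mul_sum_sq
    _ ≤ s * ∑ i, ‖x i‖^2 := by
        refine mul_le_mul (by exact_mod_cast hcard)
          (Finset.sum_le_sum_of_subset_of_nonneg (subset_univ S) (by intros; positivity))
          (by positivity) (by positivity)

lemma expand_aux (z w : ℂ) :
    ‖z + w‖ ^ 2 = ‖z‖ ^ 2 + ‖w‖ ^ 2 + 2 * (z * (starRingEnd ℂ w)).re := by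
  simp only [Complex.sq_norm]
  exact Complex.normSq_add z w

set_option maxHeartbeats 1000000 in
/-- an entrywise-bounded matrix with RIP constant δ_s ≤ δ/√2 for sparse
vectors and m ≥ 8δ⁻²K²sk has RIP for the sparse corruptions problem with constant ≤ δ. -/
theorem ripCor_of_bos {N m : ℕ} (s k : ℕ)
    (hs1 : 1 ≤ s) (hsN : s ≤ N) (hk1 : 1 ≤ k) (hkm : k ≤ m)
    (K : ℝ) (hK : 0 < K) (δ : ℝ) (hδ0 : 0 < δ) (hδ1 : δ < 1)
    (A : Matrix (Fin m) (Fin N) ℂ)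
    (hA : ∀ i j, ‖A i j‖ ≤ K / Real.sqrt (m : ℝ))
    (hRIP : RIPSparse A s (δ / Real.sqrt 2))
    (hm : (m : ℝ) ≥ 8 * δ⁻¹ ^ 2 * K ^ 2 * s * k) :
    RIPCor A s k δ := by
  set r := Real.sqrt 2 with hrdef
  have hr2 : r ^ 2 = 2 := Real.sq_sqrt (by norm_num)
  have hr1 : 1 ≤ r := by
    have h := Real.sqrt_le_sqrt (show (1:ℝ) ≤ 2 by norm_num)
    rwa [Real.sqrt_one] at h
  have hrpos : 0 < r := lt_of_lt_of_le one_pos hr1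
  set μ := Real.sqrt (m : ℝ) with hμdef
  have hμ2 : μ ^ 2 = m := Real.sq_sqrt (Nat.cast_nonneg m)
  have hm1 : (1:ℝ) ≤ m := by exact_mod_cast le_trans hk1 hkm
  have hμpos : 0 < μ := Real.sqrt_pos.mpr (by linarith)
  have hm' : 8 * K^2 * s * k ≤ δ^2 * m := by
    have h1 : δ^2 * (8 * δ⁻¹^2 * K^2 * s * k) = 8 * K^2 * s * k := by
      field_simp
    have h2 := mul_le_mul_of_nonneg_left hm (sq_nonneg δ)
    linarith
  intro x c hx hc
  set a := l2norm x ^ 2 with hadef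
  set b := l2norm c ^ 2 with hbdef
  have ha0 : 0 ≤ a := sq_nonneg _
  have hb0 : 0 ≤ b := sq_nonneg _
  set p := Real.sqrt a with hpdef
  set q := Real.sqrt b with hqdef
  have hp2 : p ^ 2 = a := Real.sq_sqrt ha0
  have hq2 : q ^ 2 = b := Real.sq_sqrt hb0
  have hp0 : 0 ≤ p := Real.sqrt_nonneg _
  have hq0 : 0 ≤ q := Real.sqrt_nonneg _
  set P := l1norm x with hPdef
  set Q := l1norm c with hQdef
  have hP0 : 0 ≤ P := l1nn_aux x
  have hQ0 : 0 ≤ Q := l1nn_aux c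
  have hP2 : P ^ 2 ≤ s * a := l1_sq_le_aux hx
  have hQ2 : Q ^ 2 ≤ k * b := l1_sq_le_aux hc
  -- pointwise bound on A.mulVec x
  have hAx : ∀ i, ‖A.mulVec x i‖ ≤ K / μ * P := by
    intro i
    have : A.mulVec x i = ∑ j, A i j * x j := by
      simp [Matrix.mulVec, dotProduct]
    rw [this]
    calc ‖∑ j, A i j * x j‖ ≤ ∑ j, ‖A i j * x j‖ := norm_sum_le _ _
      _ = ∑ j, ‖A i j‖ * ‖x j‖ := by simp [norm_mul]
      _ ≤ ∑ j, (K / μ) * ‖x j‖ := by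
          refine Finset.sum_le_sum fun j _ => ?_
          exact mul_le_mul_of_nonneg_right (hA i j) (norm_nonneg _)
      _ = K / μ * P := by rw [← Finset.mul_sum]; rfl
  -- expansion
  set C := ∑ i, ((A.mulVec x) i * (starRingEnd ℂ (c i))).re with hCdef
  have hE : l2norm (A.mulVec x + c) ^ 2 = l2norm (A.mulVec x) ^ 2 + b + 2 * C := by
    rw [l2sq_aux, l2sq_aux, hbdef, l2sq_aux, hCdef, Finset.mul_sum]
    rw [← Finset.sum_add_distrib, ← Finset.sum_add_distrib]
    refine Finset.sum_congr rfl fun i _ => ?_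
    exact expand_aux _ _
  have hCabs : |C| ≤ K / μ * P * Q := by
    calc |C| ≤ ∑ i, |((A.mulVec x) i * (starRingEnd ℂ (c i))).re| :=
          Finset.abs_sum_le_sum_abs _ _
      _ ≤ ∑ i, (K / μ * P) * ‖c i‖ := by
          refine Finset.sum_le_sum fun i _ => ?_
          calc |((A.mulVec x) i * (starRingEnd ℂ (c i))).re|
              ≤ ‖(A.mulVec x) i * (starRingEnd ℂ (c i))‖ := Complex.abs_re_le_norm _
            _ = ‖(A.mulVec x) i‖ * ‖c i‖ := by
                rw [norm_mul]
                simp [RingHomIsometric.norm_map]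
            _ ≤ (K / μ * P) * ‖c i‖ :=
                mul_le_mul_of_nonneg_right (hAx i) (norm_nonneg _)
      _ = K / μ * P * Q := by rw [← Finset.mul_sum]; rfl
  -- cross term bound
  have hPQ : P^2 * Q^2 ≤ (s*a) * (k*b) := by
    refine mul_le_mul hP2 hQ2 (sq_nonneg Q) ?_
    positivity
  have key2 : (2*K*P*Q*r)^2 ≤ (δ*p*q*μ)^2 := by
    calc (2*K*P*Q*r)^2 = 4*K^2*(P^2*Q^2)*r^2 := by ring
      _ = 8*K^2*(P^2*Q^2) := by rw [hr2]; ring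
      _ ≤ 8*K^2*((s*a)*(k*b)) := mul_le_mul_of_nonneg_left hPQ (by positivity)
      _ = (8*K^2*s*k)*(a*b) := by ring
      _ ≤ (δ^2*m)*(a*b) := mul_le_mul_of_nonneg_right hm' (by positivity)
      _ = (δ*p*q*μ)^2 := by rw [← hp2, ← hq2, ← hμ2]; ring
  have key : 2*K*P*Q*r ≤ δ*p*q*μ := by
    have hL : 0 ≤ 2*K*P*Q*r := by positivity
    have hR : 0 ≤ δ*p*q*μ := by positivity
    have h := Real.sqrt_le_sqrt key2
    rwa [Real.sqrt_sq hL, Real.sqrt_sq hR] at h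
  set d := δ / r with hddef
  have hd0 : 0 ≤ d := by positivity
  have hdr : d * r = δ := div_mul_cancel₀ δ (ne_of_gt hrpos)
  have hcross : 2 * (K/μ * P * Q) ≤ d * (p * q) := by
    have h1 : 2 * (K/μ * P * Q) = (2*K*P*Q) / μ := by ring
    have h2 : d * (p * q) = (δ * p * q) / r := by rw [hddef]; ring
    rw [h1, h2]
    rw [div_le_div_iff₀ hμpos hrpos]
    linarith [key]
  -- key scalar inequality
  have hr74 : r ≤ 7/4 := by
    have h : (7:ℝ)/4 = Real.sqrt ((7/4)^2) := (Real.sqrt_sq (by norm_num)).symm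
    rw [hrdef, h]
    exact Real.sqrt_le_sqrt (by norm_num)
  have hr1' : 1 < r := by
    rw [hrdef]
    exact (Real.lt_sqrt (by norm_num)).mpr (by norm_num)
  have hpq : a + p * q ≤ r * (a + b) := by
    rw [← hp2, ← hq2]
    have hid : 4*(r-1)*(r*(p^2+q^2) - (p^2 + p*q)) = (2*(r-1)*p - q)^2 + (7-4*r)*q^2 := by
      linear_combination (4*q^2) * hr2
    have hpos : 0 ≤ 4*(r-1)*(r*(p^2+q^2) - (p^2+p*q)) := by
      rw [hid]
      exact add_nonneg (sq_nonneg _) (mul_nonneg (by linarith) (sq_nonneg q))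
    have h4 : 0 < 4*(r-1) := by linarith
    have h5 : 0 ≤ r*(p^2+q^2) - (p^2+p*q) := by
      have h6 : 4*(r-1)*0 ≤ 4*(r-1)*(r*(p^2+q^2) - (p^2+p*q)) := by
        rw [mul_zero]; exact hpos
      exact le_of_mul_le_mul_left h6 h4
    linarith
  have hdpq : d * (a + p*q) ≤ d * (r * (a + b)) := mul_le_mul_of_nonneg_left hpq hd0
  have hδab : δ * (a + b) = d * (r * (a + b)) := by rw [← hdr]; ring
  obtain ⟨hlo, hhi⟩ := hRIP x hx
  rw [← hadef] at hlo hhi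
  have hCl : -(K / μ * P * Q) ≤ C := (abs_le.mp hCabs).1
  have hCu : C ≤ K / μ * P * Q := (abs_le.mp hCabs).2
  constructor
  · linarith [hE, hlo, hCl, hcross, hdpq, hδab, hadef]
  · linarith [hE, hhi, hCu, hcross, hdpq, hδab, hadef]
end
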